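/- Let ρ be a state on ℂ^{d_A}⊗ℂ^{d_B}, Λ a positive map on d_B×d_B matrices such that (𝟙⊗Λ)(ρ) has an eigenvector |ξ⟩ with eigenvalue λ < 0. Then tr[(𝟙⊗Λ*)(|ξ⟩⟨ξ|) · ρ] = λ < 0, while for every separable operator Π = Σ_k P_k ⊗ Q_k (P_k, Q_k positive semidefinite), tr[(𝟙⊗Λ*)(|ξ⟩⟨ξ|) · Π^T] ≥ 0. -/

import Mathlib

open Matrix Kronecker ComplexOrder

noncomputable section

/-- Application of a map `Φ` to the second tensor factor of a bipartite matrix: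
`(𝟙 ⊗ Φ)(M)`. -/
def idTensor {dA dB : ℕ}
    (Φ : Matrix (Fin dB) (Fin dB) ℂ →ₗ[ℂ] Matrix (Fin dB) (Fin dB) ℂ)
    (M : Matrix (Fin dA × Fin dB) (Fin dA × Fin dB) ℂ) :
    Matrix (Fin dA × Fin dB) (Fin dA × Fin dB) ℂ :=
  Matrix.of fun p q => Φ (Matrix.of fun j l => M (p.1, j) (q.1, l)) p.2 q.2

lemma trace_mul_sum' {n : ℕ} (M N : Matrix (Fin n) (Fin n) ℂ) :
    (M * N).trace = ∑ s, ∑ t, M s t * N t s := by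
  simp [Matrix.trace, Matrix.mul_apply, Matrix.diag]

lemma kron_psd' {m n : ℕ} {P : Matrix (Fin m) (Fin m) ℂ} {G : Matrix (Fin n) (Fin n) ℂ}
    (hP : P.PosSemidef) (hG : G.PosSemidef) : (P ⊗ₖ G).PosSemidef := by
  exact hP.kronecker hG

lemma trace_idTensor_mul' {dA dB : ℕ}
    (Φ : Matrix (Fin dB) (Fin dB) ℂ →ₗ[ℂ] Matrix (Fin dB) (Fin dB) ℂ)
    (A B : Matrix (Fin dA × Fin dB) (Fin dA × Fin dB) ℂ) :
    (idTensor Φ A * B).trace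
      = ∑ a : Fin dA, ∑ b : Fin dA, ∑ s : Fin dB, ∑ t : Fin dB,
          Φ (Matrix.of fun j l => A (a, j) (b, l)) s t * B (b, t) (a, s) := by
  rw [Matrix.trace]
  simp only [Matrix.diag, Matrix.mul_apply, idTensor, Matrix.of_apply]
  rw [Fintype.sum_prod_type]
  refine Finset.sum_congr rfl fun a _ => ?_
  have : ∀ s : Fin dB, ∑ q : Fin dA × Fin dB,
      Φ (Matrix.of fun j l => A (a, j) (q.1, l)) s q.2 * B q (a, s)
      = ∑ b : Fin dA, ∑ t : Fin dB,
        Φ (Matrix.of fun j l => A (a, j) (b, l)) s t * B (b, t) (a, s) := by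
    intro s; rw [Fintype.sum_prod_type]
  simp only [this]
  exact Finset.sum_comm

lemma swap4' {dA dB : ℕ} (f : Fin dA → Fin dA → Fin dB → Fin dB → ℂ) :
    ∑ a, ∑ b, ∑ s, ∑ t, f a b s t = ∑ b, ∑ s, ∑ a, ∑ t, f a b s t := by
  rw [Finset.sum_comm]
  exact Finset.sum_congr rfl fun b _ => Finset.sum_comm

theorem entanglement_witness_from_positive_map (dA dB : ℕ)
    (Lam LamD : Matrix (Fin dB) (Fin dB) ℂ →ₗ[ℂ] Matrix (Fin dB) (Fin dB) ℂ)
    (hpos : ∀ Q : Matrix (Fin dB) (Fin dB) ℂ, Q.PosSemidef → (Lam Q).PosSemidef)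
    (hdual : ∀ (M N : Matrix (Fin dB) (Fin dB) ℂ),
      (M * LamD N).trace = (Lam M * N).trace)
    (ρ : Matrix (Fin dA × Fin dB) (Fin dA × Fin dB) ℂ)
    (hρ : ρ.PosSemidef) (htr : ρ.trace = 1)
    (ξ : Fin dA × Fin dB → ℂ) (hξ : ∑ i, star (ξ i) * ξ i = 1)
    (lam : ℝ) (hlam : lam < 0)
    (heig : (idTensor Lam ρ).mulVec ξ = (lam : ℂ) • ξ) :
    (idTensor LamD (vecMulVec ξ (star ξ)) * ρ).trace = (lam : ℂ) ∧
    ∀ (n : ℕ) (P : Fin n → Matrix (Fin dA) (Fin dA) ℂ)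
      (Q : Fin n → Matrix (Fin dB) (Fin dB) ℂ),
      (∀ k, (P k).PosSemidef) → (∀ k, (Q k).PosSemidef) →
      0 ≤ ((idTensor LamD (vecMulVec ξ (star ξ)) * (∑ k, P k ⊗ₖ Q k)ᵀ).trace).re ∧
      ((idTensor LamD (vecMulVec ξ (star ξ)) * (∑ k, P k ⊗ₖ Q k)ᵀ).trace).im = 0 := by
  -- the key duality identity at the level of sums
  have key : ∀ (M N : Matrix (Fin dB) (Fin dB) ℂ),
      ∑ s, ∑ t, LamD N s t * M t s = ∑ s, ∑ t, Lam M s t * N t s := by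
    intro M N
    have h := hdual M N
    rw [trace_mul_sum', trace_mul_sum'] at h
    rw [← h, Finset.sum_comm]
    exact Finset.sum_congr rfl fun s _ => Finset.sum_congr rfl fun t _ => mul_comm _ _
  constructor
  · -- tr[W ρ] = λ
    rw [trace_idTensor_mul']
    have step1 : ∀ a b : Fin dA,
        (∑ s, ∑ t, LamD (Matrix.of fun j l => vecMulVec ξ (star ξ) (a, j) (b, l)) s t
            * ρ (b, t) (a, s))
        = ∑ s, ∑ t, (idTensor Lam ρ) (b, s) (a, t) * (ξ (a, t) * star (ξ (b, s))) := by
      intro a b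
      have h := key (Matrix.of fun j l => ρ (b, j) (a, l))
        (Matrix.of fun j l => vecMulVec ξ (star ξ) (a, j) (b, l))
      simp only [Matrix.of_apply] at h
      rw [h]
      simp [idTensor, Matrix.vecMulVec_apply, Pi.star_apply]
    simp only [step1]
    rw [swap4']
    have step2 : ∀ b : Fin dA, ∀ s : Fin dB,
        (∑ a, ∑ t, (idTensor Lam ρ) (b, s) (a, t) * (ξ (a, t) * star (ξ (b, s))))
        = star (ξ (b, s)) * ((lam : ℂ) * ξ (b, s)) := by
      intro b s
      have hmv : (idTensor Lam ρ).mulVec ξ (b, s) = (lam : ℂ) * ξ (b, s) := by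
        rw [heig]; simp
      calc (∑ a, ∑ t, (idTensor Lam ρ) (b, s) (a, t) * (ξ (a, t) * star (ξ (b, s))))
          = star (ξ (b, s)) * ∑ a, ∑ t, (idTensor Lam ρ) (b, s) (a, t) * ξ (a, t) := by
            rw [Finset.mul_sum]
            refine Finset.sum_congr rfl fun a _ => ?_
            rw [Finset.mul_sum]
            exact Finset.sum_congr rfl fun t _ => by ring
        _ = star (ξ (b, s)) * ((idTensor Lam ρ).mulVec ξ (b, s)) := by
            rw [Matrix.mulVec, dotProduct, Fintype.sum_prod_type]
        _ = star (ξ (b, s)) * ((lam : ℂ) * ξ (b, s)) := by rw [hmv]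
    simp only [step2]
    have : (∑ b : Fin dA, ∑ s : Fin dB, star (ξ (b, s)) * ((lam : ℂ) * ξ (b, s)))
        = (lam : ℂ) * ∑ i, star (ξ i) * ξ i := by
      rw [Finset.mul_sum, Fintype.sum_prod_type]
      refine Finset.sum_congr rfl fun b _ => ?_
      exact Finset.sum_congr rfl fun s _ => by ring
    rw [this, hξ, mul_one]
  · -- positivity on separable operators
    intro n P Q hP hQ
    have main : (idTensor LamD (vecMulVec ξ (star ξ)) * (∑ k, P k ⊗ₖ Q k)ᵀ).trace
        = ∑ k, (star ξ) ⬝ᵥ (((P k)ᵀ ⊗ₖ Lam ((Q k)ᵀ)).mulVec ξ) := by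
      rw [Matrix.transpose_sum, Matrix.mul_sum, Matrix.trace_sum]
      refine Finset.sum_congr rfl fun k _ => ?_
      rw [trace_idTensor_mul']
      have hB : ∀ (a b : Fin dA) (s t : Fin dB),
          ((P k ⊗ₖ Q k)ᵀ) (b, t) (a, s) = P k a b * Q k s t := by
        intro a b s t
        simp [Matrix.transpose_apply, Matrix.kroneckerMap_apply]
      simp only [hB]
      have step1 : ∀ a b : Fin dA,
          (∑ s, ∑ t, LamD (Matrix.of fun j l => vecMulVec ξ (star ξ) (a, j) (b, l)) s t
              * (P k a b * Q k s t))
          = ∑ s, ∑ t, P k a b * (Lam ((Q k)ᵀ) s t * (ξ (a, t) * star (ξ (b, s)))) := by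
        intro a b
        have h := key ((Q k)ᵀ)
          (Matrix.of fun j l => vecMulVec ξ (star ξ) (a, j) (b, l))
        have h2 : (∑ s, ∑ t, LamD (Matrix.of fun j l => vecMulVec ξ (star ξ) (a, j) (b, l)) s t
              * (P k a b * Q k s t))
            = P k a b * ∑ s, ∑ t,
              LamD (Matrix.of fun j l => vecMulVec ξ (star ξ) (a, j) (b, l)) s t
                * ((Q k)ᵀ) t s := by
          rw [Finset.mul_sum]
          refine Finset.sum_congr rfl fun s _ => ?_
          rw [Finset.mul_sum]
          refine Finset.sum_congr rfl fun t _ => ?_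
          rw [Matrix.transpose_apply]; ring
        rw [h2, h, Finset.mul_sum]
        refine Finset.sum_congr rfl fun s _ => ?_
        rw [Finset.mul_sum]
        refine Finset.sum_congr rfl fun t _ => ?_
        simp [Matrix.vecMulVec_apply, Pi.star_apply]
      simp only [step1]
      rw [swap4']
      rw [dotProduct, Fintype.sum_prod_type]
      refine Finset.sum_congr rfl fun b _ => Finset.sum_congr rfl fun s _ => ?_
      rw [Matrix.mulVec, dotProduct, Fintype.sum_prod_type, Finset.mul_sum]
      refine Finset.sum_congr rfl fun a _ => ?_
      rw [Finset.mul_sum]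
      refine Finset.sum_congr rfl fun t _ => ?_
      simp [Matrix.kroneckerMap_apply, Matrix.transpose_apply, Pi.star_apply]
      ring
    have hnn : (0 : ℂ) ≤ ∑ k, (star ξ) ⬝ᵥ (((P k)ᵀ ⊗ₖ Lam ((Q k)ᵀ)).mulVec ξ) := by
      refine Finset.sum_nonneg fun k _ => ?_
      exact (kron_psd' (hP k).transpose (hpos _ (hQ k).transpose)).dotProduct_mulVec_nonneg ξ
    rw [main]
    rw [Complex.le_def] at hnn
    simp only [Complex.zero_re, Complex.zero_im] at hnn
    exact ⟨hnn.1, hnn.2.symm⟩
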